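/- Let y be a C-ℓ₁ᵏ-average, i.e. y = (x_1 + ⋯ + x_k)/k for a finite block sequence x_1 < ⋯ < x_k with ‖x_i‖ ≤ C and ‖y‖ = 1. Then for any successive intervals E_1 < ⋯ < E_n with n < k, one has ∑_{i=1}^n ‖E_i y‖ ≤ C(1 + 2n/k), where E_i y denotes the restriction of y to the interval E_i. -/

import Mathlib

/-- An interval of ordinals. -/
def IsOrdInterval (I : Set Ordinal) : Prop :=
  ∀ a ∈ I, ∀ b ∈ I, ∀ c : Ordinal, a ≤ c → c ≤ b → c ∈ I

/-- A transfinite Schauder basis `(vec α)_{α<γ}` of a normed space `X`, encoded together with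
its uniformly bounded interval projections. -/
structure TransfiniteBasis (γ : Ordinal) (X : Type*) [NormedAddCommGroup X]
    [NormedSpace ℝ X] where
  vec : Ordinal → X
  proj : Set Ordinal → (X →L[ℝ] X)
  C : ℝ
  one_le_C : 1 ≤ C
  vec_ne_zero : ∀ α : Ordinal, α < γ → vec α ≠ 0
  total : Submodule.topologicalClosure (Submodule.span ℝ (vec '' Set.Iio γ)) = ⊤
  norm_proj_le : ∀ I : Set Ordinal, IsOrdInterval I → ‖proj I‖ ≤ C
  proj_apply_mem : ∀ I : Set Ordinal, IsOrdInterval I → ∀ α : Ordinal, α < γ → α ∈ I →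
    proj I (vec α) = vec α
  proj_apply_not_mem : ∀ I : Set Ordinal, IsOrdInterval I → ∀ α : Ordinal, α < γ → α ∉ I →
    proj I (vec α) = 0

/-- if y is a C-ℓ₁ᵏ-average (w.r.t. a bimonotone transfinite basis) and
E_1 < ⋯ < E_n are successive intervals with n < k, then ∑ ‖E_i y‖ ≤ C(1 + 2n/k). -/
theorem ell1_average_interval_estimate {X : Type*} [NormedAddCommGroup X] [NormedSpace ℝ X]
    (γ : Ordinal) (B : TransfiniteBasis γ X) (hbimonotone : B.C = 1)
    (k n : ℕ) (hk : 0 < k) (hn : n < k)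
    (x : ℕ → X) (F : ℕ → Finset Ordinal) (C : ℝ)
    (hFsub : ∀ i, i < k → ↑(F i) ⊆ Set.Iio γ)
    (hFblock : ∀ i j : ℕ, i < j → j < k → ∀ a ∈ F i, ∀ b ∈ F j, a < b)
    (hxspan : ∀ i, i < k → x i ∈ Submodule.span ℝ (B.vec '' ↑(F i)))
    (hxC : ∀ i, i < k → ‖x i‖ ≤ C)
    (y : X) (hy : y = (k : ℝ)⁻¹ • ∑ i ∈ Finset.range k, x i) (hynorm : ‖y‖ = 1)
    (E : ℕ → Set Ordinal) (hE : ∀ i, i < n → IsOrdInterval (E i))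
    (hEblock : ∀ i j : ℕ, i < j → j < n → ∀ a ∈ E i, ∀ b ∈ E j, a < b) :
    ∑ i ∈ Finset.range n, ‖B.proj (E i) y‖ ≤ C * (1 + 2 * (n : ℝ) / (k : ℝ)) := by
  classical
  have hC0 : 0 ≤ C := le_trans (norm_nonneg (x 0)) (hxC 0 hk)
  have hkR : (0:ℝ) < (k:ℝ) := by exact_mod_cast hk
  have hk0 : (k:ℝ) ≠ 0 := hkR.ne'
  -- projections are contractions
  have hpn : ∀ j, j < n → ∀ z : X, ‖B.proj (E j) z‖ ≤ ‖z‖ := by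
    intro j hj z
    have h1 : ‖B.proj (E j)‖ ≤ 1 := hbimonotone ▸ B.norm_proj_le _ (hE j hj)
    calc ‖B.proj (E j) z‖ ≤ ‖B.proj (E j)‖ * ‖z‖ := (B.proj (E j)).le_opNorm z
      _ ≤ 1 * ‖z‖ := mul_le_mul_of_nonneg_right h1 (norm_nonneg z)
      _ = ‖z‖ := one_mul _
  -- projection acts as identity on span of vectors supported inside I
  have hmem : ∀ I : Set Ordinal, IsOrdInterval I → ∀ S : Finset Ordinal,
      ↑S ⊆ Set.Iio γ → (∀ a ∈ S, a ∈ I) →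
      ∀ z ∈ Submodule.span ℝ (B.vec '' ↑S), B.proj I z = z := by
    intro I hI S hS hSI z hz
    induction hz using Submodule.span_induction with
    | mem w hw =>
        obtain ⟨a, ha, rfl⟩ := hw
        exact B.proj_apply_mem I hI a (hS ha) (hSI a ha)
    | zero => simp
    | add u v hu hv hu' hv' => simp [map_add, hu', hv']
    | smul r u hu hu' => simp [map_smul, hu']
  -- projection kills span of vectors supported outside I
  have hnot : ∀ I : Set Ordinal, IsOrdInterval I → ∀ S : Finset Ordinal,
      ↑S ⊆ Set.Iio γ → (∀ a ∈ S, a ∉ I) →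
      ∀ z ∈ Submodule.span ℝ (B.vec '' ↑S), B.proj I z = 0 := by
    intro I hI S hS hSI z hz
    induction hz using Submodule.span_induction with
    | mem w hw =>
        obtain ⟨a, ha, rfl⟩ := hw
        exact B.proj_apply_not_mem I hI a (hS ha) (hSI a ha)
    | zero => simp
    | add u v hu hv hu' hv' => simp [map_add, hu', hv']
    | smul r u hu hu' => simp [map_smul, hu']
  set T : ℕ → Finset ℕ :=
    fun j => (Finset.range k).filter (fun i => ∃ a ∈ F i, a ∈ E j) with hTdef
  have hTmem : ∀ j i, i ∈ T j ↔ i < k ∧ ∃ a ∈ F i, a ∈ E j := by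
    intro j i
    rw [hTdef]
    simp [Finset.mem_filter]
  -- per-interval estimate
  have hnormj : ∀ j ∈ Finset.range n, ‖B.proj (E j) y‖ ≤ C * ((T j).card : ℝ) / (k:ℝ) := by
    intro j hj
    rw [Finset.mem_range] at hj
    rw [hy, map_smul, map_sum, norm_smul, norm_inv, Real.norm_natCast]
    have hsum : ‖∑ i ∈ Finset.range k, B.proj (E j) (x i)‖ ≤ C * ((T j).card : ℝ) := by
      calc ‖∑ i ∈ Finset.range k, B.proj (E j) (x i)‖
          ≤ ∑ i ∈ Finset.range k, ‖B.proj (E j) (x i)‖ := norm_sum_le _ _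
        _ ≤ ∑ i ∈ Finset.range k, (if i ∈ T j then C else 0) := by
            apply Finset.sum_le_sum
            intro i hi
            rw [Finset.mem_range] at hi
            by_cases hiT : i ∈ T j
            · simp only [hiT, if_true]
              exact le_trans (hpn j hj _) (hxC i hi)
            · simp only [hiT, if_false]
              have hz : B.proj (E j) (x i) = 0 := by
                apply hnot (E j) (hE j hj) (F i) (hFsub i hi) _ (x i) (hxspan i hi)
                intro a ha haE
                exact hiT ((hTmem j i).mpr ⟨hi, a, ha, haE⟩)
              rw [hz, norm_zero]
        _ = C * ((T j).card : ℝ) := by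
            rw [Finset.sum_ite_mem]
            have : Finset.range k ∩ T j = T j :=
              Finset.inter_eq_right.mpr (fun i hi => Finset.mem_range.mpr ((hTmem j i).mp hi).1)
            rw [this, Finset.sum_const, nsmul_eq_mul, mul_comm]
    calc ((k:ℝ))⁻¹ * ‖∑ i ∈ Finset.range k, B.proj (E j) (x i)‖
        ≤ ((k:ℝ))⁻¹ * (C * ((T j).card : ℝ)) := by
          exact mul_le_mul_of_nonneg_left hsum (by positivity)
      _ = C * ((T j).card : ℝ) / (k:ℝ) := by ring
  -- the counting estimate
  have hcountN : ∑ j ∈ Finset.range n, (T j).card ≤ k + 2 * n := by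
    set Int : ℕ → Finset ℕ := fun j => (T j).filter (fun i => ∀ a ∈ F i, a ∈ E j) with hIdef
    set Bd : ℕ → Finset ℕ := fun j => (T j).filter (fun i => ¬ ∀ a ∈ F i, a ∈ E j) with hBdef
    have hsplit : ∀ j, (T j).card = (Int j).card + (Bd j).card := by
      intro j
      rw [hIdef, hBdef]
      exact (Finset.card_filter_add_card_filter_not _).symm
    have hInt : ∑ j ∈ Finset.range n, (Int j).card ≤ k := by
      have hdisj : ∀ j ∈ Finset.range n, ∀ j' ∈ Finset.range n, j ≠ j' →
          Disjoint (Int j) (Int j') := by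
        intro j hj j' hj' hne
        rw [Finset.mem_range] at hj hj'
        rw [Finset.disjoint_left]
        intro i hij hij'
        obtain ⟨hiT, hall⟩ := Finset.mem_filter.mp hij
        obtain ⟨hiT', hall'⟩ := Finset.mem_filter.mp hij'
        obtain ⟨_, a, ha, haE⟩ := (hTmem j i).mp hiT
        have haE' : a ∈ E j' := hall' a ha
        rcases lt_or_gt_of_ne hne with h | h
        · exact absurd (hEblock j j' h hj' a haE a haE') (lt_irrefl a)
        · exact absurd (hEblock j' j h hj a haE' a haE) (lt_irrefl a)
      calc ∑ j ∈ Finset.range n, (Int j).card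
          = ((Finset.range n).biUnion Int).card := (Finset.card_biUnion hdisj).symm
        _ ≤ (Finset.range k).card := Finset.card_le_card (by
            intro i hi
            obtain ⟨j, hj, hij⟩ := Finset.mem_biUnion.mp hi
            exact Finset.mem_range.mpr ((hTmem j i).mp (Finset.mem_filter.mp hij).1).1)
        _ = k := Finset.card_range k
    have hBd : ∀ j ∈ Finset.range n, (Bd j).card ≤ 2 := by
      intro j hjmem
      rw [Finset.mem_range] at hjmem
      by_cases hTne : (T j).Nonempty
      · have hsub : Bd j ⊆ {(T j).min' hTne, (T j).max' hTne} := by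
          intro i hi
          obtain ⟨hiT, hnall⟩ := Finset.mem_filter.mp hi
          by_contra hins
          simp only [Finset.mem_insert, Finset.mem_singleton] at hins
          push_neg at hins
          obtain ⟨h1, h2⟩ := hins
          have hmin : (T j).min' hTne < i := lt_of_le_of_ne ((T j).min'_le i hiT) (Ne.symm h1)
          have hmax : i < (T j).max' hTne := lt_of_le_of_ne ((T j).le_max' i hiT) h2
          obtain ⟨hminr, a, ha, haE⟩ := (hTmem j _).mp ((T j).min'_mem hTne)
          obtain ⟨hmaxr, b, hb, hbE⟩ := (hTmem j _).mp ((T j).max'_mem hTne)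
          apply hnall
          intro c hc
          have h1c : a < c := hFblock _ i hmin ((hTmem j i).mp hiT).1 a ha c hc
          have h2c : c < b := hFblock i _ hmax hmaxr c hc b hb
          exact hE j hjmem a haE b hbE c h1c.le h2c.le
        calc (Bd j).card ≤ ({(T j).min' hTne, (T j).max' hTne} : Finset ℕ).card :=
              Finset.card_le_card hsub
          _ ≤ 2 := (Finset.card_insert_le _ _).trans (by simp)
      · have hTe : T j = ∅ := Finset.not_nonempty_iff_eq_empty.mp hTne
        rw [hBdef]
        simp [hTe]
    calc ∑ j ∈ Finset.range n, (T j).card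
        = ∑ j ∈ Finset.range n, ((Int j).card + (Bd j).card) :=
          Finset.sum_congr rfl fun j _ => hsplit j
      _ = (∑ j ∈ Finset.range n, (Int j).card) + ∑ j ∈ Finset.range n, (Bd j).card :=
          Finset.sum_add_distrib
      _ ≤ k + ∑ j ∈ Finset.range n, 2 := add_le_add hInt (Finset.sum_le_sum hBd)
      _ = k + 2 * n := by
          rw [Finset.sum_const, Finset.card_range, smul_eq_mul, mul_comm]
  have hcountR : (∑ j ∈ Finset.range n, ((T j).card : ℝ)) ≤ (k:ℝ) + 2 * n := by
    have := hcountN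
    push_cast [← Nat.cast_sum]
    exact_mod_cast this
  calc ∑ j ∈ Finset.range n, ‖B.proj (E j) y‖
      ≤ ∑ j ∈ Finset.range n, C * ((T j).card : ℝ) / (k:ℝ) := Finset.sum_le_sum hnormj
    _ = (∑ j ∈ Finset.range n, C * ((T j).card : ℝ)) / (k:ℝ) := by
        rw [Finset.sum_div]
    _ = C * (∑ j ∈ Finset.range n, ((T j).card : ℝ)) / (k:ℝ) := by
        rw [Finset.mul_sum]
    _ ≤ C * ((k:ℝ) + 2 * n) / (k:ℝ) := by
        gcongr
    _ = C * (1 + 2 * (n:ℝ) / (k:ℝ)) := by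
        field_simp
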